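/- arXiv:2010.06862 — 3 statements merged into one kernel-verified Lean document; each statement's English description precedes it below -/
import Mathlib

section
/- Let γ, γ₀ > 0, V₀ ≥ 0, and 0 < Ω < γ. Then for all f ∈ Σ, the quadratic form B(f) := ‖∇f‖²_{L²} + 2∫_{ℝ²} V |f|² dx − 2Ω L(f), with V(x) = (γ²/2)|x|² + V₀ e^{−γ₀|x|²}, satisfies C₂(‖∇f‖²_{L²} + ‖x f‖²_{L²}) ≤ B(f) ≤ C₁(‖∇f‖²_{L²} + ‖x f‖²_{L²}) for positive constants C₁, C₂ depending only on γ, Ω, V₀, with C₂ = min((γ²−Ω²)/(γ²+Ω²), (γ²−Ω²)/2). -/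
open MeasureTheory

noncomputable section

/-- The plane `ℝ²`. -/
abbrev R2 : Type := EuclideanSpace ℝ (Fin 2)

/-- The `j`-th (classical) partial derivative of a complex-valued function on `ℝ²`. -/
noncomputable def pd (f : R2 → ℂ) (j : Fin 2) (x : R2) : ℂ :=
  fderiv ℝ f x (EuclideanSpace.single j 1)

/-- `|∇f(x)|²`, the squared length of the gradient. -/
noncomputable def gradsq (f : R2 → ℂ) (x : R2) : ℝ :=
  ‖pd f 0 x‖ ^ 2 + ‖pd f 1 x‖ ^ 2

/-- The angular momentum `L(f) = ∫ conj f · i (x₂ ∂₁ f − x₁ ∂₂ f)`. -/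
noncomputable def angMom (f : R2 → ℂ) : ℂ :=
  ∫ x : R2, (starRingEnd ℂ) (f x) *
    (Complex.I * ((x 1 : ℂ) * pd f 0 x - (x 0 : ℂ) * pd f 1 x))

/-- The trapping potential `V(x) = (γ²/2)|x|² + V₀ e^{−γ₀|x|²}`. -/
noncomputable def Vpot (γ γ₀ V₀ : ℝ) (x : R2) : ℝ :=
  γ ^ 2 / 2 * ‖x‖ ^ 2 + V₀ * Real.exp (-(γ₀ * ‖x‖ ^ 2))

/-- The quadratic form `B(f) = ‖∇f‖² + 2∫ V|f|² − 2Ω L(f)`. -/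
noncomputable def Bform (γ γ₀ V₀ Ω : ℝ) (f : R2 → ℂ) : ℝ :=
  (∫ x : R2, gradsq f x) + 2 * (∫ x : R2, Vpot γ γ₀ V₀ x * ‖f x‖ ^ 2)
    - 2 * Ω * (angMom f).re


open Set

lemma inner_deriv_bound (z w : ℂ) : |2 * (inner ℝ z w : ℝ)| ≤ (1/4) * ‖z‖^2 + 4 * ‖w‖^2 := by
  have h1 : |(inner ℝ z w : ℝ)| ≤ ‖z‖ * ‖w‖ := abs_real_inner_le_norm z w
  have h2 : 0 ≤ ‖z‖ := norm_nonneg _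
  have h3 : 0 ≤ ‖w‖ := norm_nonneg _
  rw [abs_mul, abs_two]
  nlinarith [sq_nonneg (‖z‖/2 - 2*‖w‖)]

/-- 1D weighted Poincaré-type bound. -/
lemma onedim (w : ℝ → ℝ) (hw0 : ∀ t, 0 ≤ w t) (hw1 : ∀ t, w t ≤ 1)
    (g : ℝ → ℂ) (hg : Differentiable ℝ g)
    (hT : Integrable (fun t => t^2 * ‖g t‖^2))
    (hG : Integrable (fun t => ‖deriv g t‖^2)) :
    ∫ t, w t * ‖g t‖^2 ≤ 6 * (∫ t, t^2 * ‖g t‖^2) + 16 * ∫ t, ‖deriv g t‖^2 := by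
  set φ : ℝ → ℝ := fun t => ‖g t‖^2 with hφ
  have hφc : Continuous φ := (hg.continuous.norm).pow 2
  set φ' : ℝ → ℝ := fun t => 2 * (inner ℝ (g t) (deriv g t) : ℝ) with hφ'
  have hd : ∀ t, HasDerivAt φ (φ' t) t := fun t => ((hg t).hasDerivAt).norm_sq
  have hφ'bd : ∀ t, |φ' t| ≤ (1/4) * φ t + 4 * ‖deriv g t‖^2 :=
    fun t => inner_deriv_bound _ _
  have hφ'meas : Measurable φ' := by
    apply Measurable.const_mul
    exact Measurable.inner (hg.continuous.measurable) (measurable_deriv g)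
  have hmaj : IntegrableOn (fun t => (1/4) * φ t + 4 * ‖deriv g t‖^2) (Icc (-2:ℝ) 2) := by
    exact ((hφc.continuousOn.integrableOn_compact isCompact_Icc).const_mul _).add
      (hG.integrableOn.const_mul _)
  have hφ'int : IntegrableOn φ' (Icc (-2:ℝ) 2) := by
    apply Integrable.mono' hmaj (hφ'meas.aestronglyMeasurable.restrict)
    filter_upwards with t using by simpa using hφ'bd t
  set K := ∫ t in Icc (-2:ℝ) 2, |φ' t| with hK
  set T := ∫ t, t^2 * φ t with hTdef
  set G := ∫ t, ‖deriv g t‖^2 with hGdef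
  set I := ∫ t in Icc (-1:ℝ) 1, φ t with hI
  set J := ∫ s in Icc (1:ℝ) 2, φ s with hJ
  have hT0 : 0 ≤ T := integral_nonneg (fun t => by positivity)
  have hG0 : 0 ≤ G := integral_nonneg (fun t => by positivity)
  have hI0 : 0 ≤ I := setIntegral_nonneg measurableSet_Icc (fun t _ => by positivity)
  -- step: φ t ≤ φ s + K for t ∈ [-1,1], s ∈ [1,2]
  have key : ∀ t ∈ Icc (-1:ℝ) 1, ∀ s ∈ Icc (1:ℝ) 2, φ t ≤ φ s + K := by
    intro t ht s hs
    have hts : t ≤ s := le_trans ht.2 hs.1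
    have hsub : uIcc t s ⊆ Icc (-2:ℝ) 2 := by
      rw [uIcc_of_le hts]
      intro u hu
      exact ⟨by linarith [ht.1, hu.1], by linarith [hs.2, hu.2]⟩
    have hii : IntervalIntegrable φ' volume t s :=
      (hφ'int.mono_set hsub).intervalIntegrable
    have hftc : ∫ u in t..s, φ' u = φ s - φ t :=
      intervalIntegral.integral_eq_sub_of_hasDerivAt (fun u _ => hd u) hii
    have habs : |∫ u in t..s, φ' u| ≤ K := by
      calc |∫ u in t..s, φ' u| ≤ ∫ u in t..s, |φ' u| :=
            intervalIntegral.abs_integral_le_integral_abs hts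
        _ = ∫ u in Ioc t s, |φ' u| := intervalIntegral.integral_of_le hts
        _ ≤ K := by
            apply setIntegral_mono_set hφ'int.abs
            · filter_upwards with u using abs_nonneg _
            · exact HasSubset.Subset.eventuallyLE (fun u hu =>
                ⟨by linarith [ht.1, hu.1.le], by linarith [hs.2, hu.2]⟩)
    linarith [neg_abs_le (∫ u in t..s, φ' u), hftc, habs]
  have hK0 : 0 ≤ K := setIntegral_nonneg measurableSet_Icc (fun t _ => abs_nonneg _)
  have hJ0 : 0 ≤ J := setIntegral_nonneg measurableSet_Icc (fun t _ => by positivity)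
  have hphiIcc : ∀ (a b : ℝ), IntegrableOn φ (Icc a b) :=
    fun a b => hφc.continuousOn.integrableOn_compact isCompact_Icc
  have hfin : ∀ (a b : ℝ), volume (Icc a b) < ⊤ := by
    intro a b; rw [Real.volume_Icc]; exact ENNReal.ofReal_lt_top
  have hconst : ∀ (a b c : ℝ), a ≤ b → (∫ _ in Icc a b, c) = (b - a) * c := by
    intro a b c hab
    rw [setIntegral_const, Real.volume_real_Icc, max_eq_left (by linarith), smul_eq_mul]
  have step2 : ∀ t ∈ Icc (-1:ℝ) 1, φ t ≤ J + K := by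
    intro t ht
    have h1 : φ t = ∫ _ in Icc (1:ℝ) 2, φ t := by
      rw [hconst 1 2 _ (by norm_num)]; ring
    rw [h1]
    have h2 : (∫ s in Icc (1:ℝ) 2, (φ s + K)) = J + K := by
      rw [integral_add (hphiIcc 1 2) (integrableOn_const (hfin 1 2).ne),
        hconst 1 2 _ (by norm_num)]
      ring
    rw [← h2]
    apply setIntegral_mono_on
    · exact integrableOn_const (hfin 1 2).ne
    · exact (hphiIcc 1 2).add (integrableOn_const (hfin 1 2).ne)
    · exact measurableSet_Icc
    · exact fun s hs => key t ht s hs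
  have step3 : I ≤ 2 * (J + K) := by
    have h := setIntegral_mono_on (hphiIcc (-1) 1)
        (integrableOn_const (hfin (-1) 1).ne) measurableSet_Icc step2
    rw [hconst (-1) 1 _ (by norm_num)] at h
    linarith [h]
  have hJT : J ≤ T := by
    have h1 : J ≤ ∫ s in Icc (1:ℝ) 2, s^2 * φ s := by
      apply setIntegral_mono_on (hphiIcc 1 2) hT.integrableOn measurableSet_Icc
      intro s hs
      have h2 : (1:ℝ) ≤ s := hs.1
      have h3 : φ s = ‖g s‖^2 := rfl
      have h4 : (0:ℝ) ≤ ‖g s‖^2 := by positivity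
      nlinarith [mul_nonneg (by nlinarith : (0:ℝ) ≤ s^2 - 1) h4]
    have h2 : (∫ s in Icc (1:ℝ) 2, s^2 * φ s) ≤ T :=
      setIntegral_le_integral hT (Filter.Eventually.of_forall (fun s => by positivity))
    linarith
  have hindint : Integrable ((Icc (-1:ℝ) 1).indicator φ) volume :=
    (hphiIcc (-1) 1).integrable_indicator measurableSet_Icc
  have hptind : ∀ t : ℝ, φ t ≤ (Icc (-1:ℝ) 1).indicator φ t + t^2 * φ t := by
    intro t
    by_cases h : t ∈ Icc (-1:ℝ) 1
    · rw [indicator_of_mem h]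
      have : 0 ≤ t^2 * φ t := by positivity
      linarith
    · rw [indicator_of_notMem h]
      simp only [mem_Icc, not_and_or, not_le] at h
      have h1 : (1:ℝ) ≤ t^2 := by rcases h with h | h <;> nlinarith
      have : 0 ≤ φ t := by positivity
      nlinarith
  have hIcc2 : (∫ t in Icc (-2:ℝ) 2, φ t) ≤ I + T := by
    have h1 : (∫ t in Icc (-2:ℝ) 2, φ t) ≤
        ∫ t in Icc (-2:ℝ) 2, ((Icc (-1:ℝ) 1).indicator φ t + t^2 * φ t) := by
      exact setIntegral_mono_on (hphiIcc (-2) 2)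
        (hindint.integrableOn.add hT.integrableOn) measurableSet_Icc
        (fun t _ => hptind t)
    have h2 : (∫ t in Icc (-2:ℝ) 2, ((Icc (-1:ℝ) 1).indicator φ t + t^2 * φ t))
        = (∫ t in Icc (-2:ℝ) 2, (Icc (-1:ℝ) 1).indicator φ t)
          + ∫ t in Icc (-2:ℝ) 2, t^2 * φ t :=
      integral_add hindint.integrableOn hT.integrableOn
    have h3 : (∫ t in Icc (-2:ℝ) 2, (Icc (-1:ℝ) 1).indicator φ t) = I := by
      rw [setIntegral_indicator measurableSet_Icc]
      congr 1
      rw [Icc_inter_Icc]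
      norm_num
    have h4 : (∫ t in Icc (-2:ℝ) 2, t^2 * φ t) ≤ T :=
      setIntegral_le_integral hT (Filter.Eventually.of_forall (fun s => by positivity))
    linarith
  have hKbd : K ≤ (1/4) * (I + T) + 4 * G := by
    have h1 : K ≤ ∫ t in Icc (-2:ℝ) 2, ((1/4) * φ t + 4 * ‖deriv g t‖^2) :=
      setIntegral_mono_on hφ'int.abs hmaj measurableSet_Icc (fun t _ => hφ'bd t)
    have h2 : (∫ t in Icc (-2:ℝ) 2, ((1/4) * φ t + 4 * ‖deriv g t‖^2))
        = (1/4) * (∫ t in Icc (-2:ℝ) 2, φ t) + 4 * ∫ t in Icc (-2:ℝ) 2, ‖deriv g t‖^2 := by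
      rw [integral_add ((hphiIcc (-2) 2).const_mul _) (hG.integrableOn.const_mul _),
        integral_const_mul, integral_const_mul]
    have h3 : (∫ t in Icc (-2:ℝ) 2, ‖deriv g t‖^2) ≤ G :=
      setIntegral_le_integral hG (Filter.Eventually.of_forall (fun s => by positivity))
    linarith
  have hIbd : I ≤ 5 * T + 16 * G := by linarith
  -- final
  have hfin2 : (∫ t, w t * φ t) ≤ ∫ t, ((Icc (-1:ℝ) 1).indicator φ t + t^2 * φ t) := by
    apply integral_mono_of_nonneg
    · exact Filter.Eventually.of_forall (fun t => mul_nonneg (hw0 t) (by positivity))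
    · exact hindint.add hT
    · apply Filter.Eventually.of_forall
      intro t
      show w t * φ t ≤ (Icc (-1:ℝ) 1).indicator φ t + t^2 * φ t
      have h0 : 0 ≤ φ t := by positivity
      have h1 : w t * φ t ≤ φ t := by nlinarith [hw1 t, hw0 t]
      linarith [hptind t]
  have hfin3 : (∫ t, ((Icc (-1:ℝ) 1).indicator φ t + t^2 * φ t)) = I + T := by
    rw [integral_add hindint hT, integral_indicator measurableSet_Icc]
  linarith





noncomputable def σeq : R2 ≃ᵐ (ℝ × ℝ) :=
  (MeasurableEquiv.toLp 2 (Fin 2 → ℝ)).symm.trans (MeasurableEquiv.finTwoArrow)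

lemma σmp : MeasurePreserving σeq volume volume :=
  (volume_preserving_finTwoArrow ℝ).comp (EuclideanSpace.volume_preserving_symm_measurableEquiv_toLp (Fin 2))

noncomputable def mk2 (a b : ℝ) : R2 := σeq.symm (a, b)

lemma mk2_zero (a b : ℝ) : mk2 a b 0 = a := rfl
lemma mk2_one (a b : ℝ) : mk2 a b 1 = b := rfl

lemma mk2_norm (a b : ℝ) : ‖mk2 a b‖^2 = a^2 + b^2 := by
  rw [EuclideanSpace.norm_eq, Real.sq_sqrt (by positivity)]
  rw [Fin.sum_univ_two, mk2_zero, mk2_one]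
  simp [sq_abs]

lemma mk2_add (a b : ℝ) :
    mk2 a b = mk2 a 0 + b • (EuclideanSpace.single (1 : Fin 2) (1:ℝ)) := by
  ext i
  fin_cases i <;>
    simp [mk2_zero, mk2_one, EuclideanSpace.single_apply, PiLp.add_apply, PiLp.smul_apply]

lemma slice_hasDerivAt (f : R2 → ℂ) (hf : Differentiable ℝ f) (a b : ℝ) :
    HasDerivAt (fun t => f (mk2 a t)) (pd f 1 (mk2 a b)) b := by
  have heq : (fun t => f (mk2 a t))
      = fun t => f (mk2 a 0 + t • (EuclideanSpace.single (1 : Fin 2) (1:ℝ))) := by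
    funext t; rw [mk2_add]
  rw [heq]
  have h1 : HasDerivAt (fun t : ℝ => mk2 a 0 + t • (EuclideanSpace.single (1 : Fin 2) (1:ℝ)))
      (EuclideanSpace.single (1 : Fin 2) (1:ℝ)) b := by
    simpa using ((hasDerivAt_id b).smul_const (EuclideanSpace.single (1 : Fin 2) (1:ℝ))).const_add
      (mk2 a 0)
  have h2 := ((hf _).hasFDerivAt).comp_hasDerivAt b h1
  rw [show mk2 a 0 + b • (EuclideanSpace.single (1 : Fin 2) (1:ℝ)) = mk2 a b from
    (mk2_add a b).symm] at h2
  exact h2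

lemma mk2_cont (a : ℝ) : Continuous (fun b => mk2 a b) := by
  have heq : (fun t => mk2 a t)
      = fun t => mk2 a 0 + t • (EuclideanSpace.single (1 : Fin 2) (1:ℝ)) := by
    funext t; rw [mk2_add]
  rw [heq]
  fun_prop

lemma pd_meas (f : R2 → ℂ) (j : Fin 2) : Measurable (pd f j) :=
  measurable_fderiv_apply_const ℝ f _

lemma transfer (F : R2 → ℝ) : ∫ x, F x = ∫ p : ℝ × ℝ, F (mk2 p.1 p.2) := by
  rw [← (σmp.symm σeq).integral_comp σeq.symm.measurableEmbedding F]
  rfl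

lemma transferInt (F : R2 → ℝ) (hF : Integrable F volume) :
    Integrable (fun p : ℝ × ℝ => F (mk2 p.1 p.2)) volume := by
  have := ((σmp.symm σeq).integrable_comp_emb σeq.symm.measurableEmbedding).2 hF
  exact this

lemma twodim (γ₀ : ℝ) (hγ₀ : 0 < γ₀) (f : R2 → ℂ) (hf : Differentiable ℝ f)
    (hφint : Integrable (fun x : R2 => ‖f x‖^2) volume)
    (hgrad : Integrable (gradsq f) volume)
    (hxf : Integrable (fun x : R2 => ‖x‖^2 * ‖f x‖^2) volume) :
    (∫ x : R2, Real.exp (-(γ₀ * ‖x‖^2)) * ‖f x‖^2)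
      ≤ 6 * (∫ x : R2, ‖x‖^2 * ‖f x‖^2) + 16 * ∫ x, gradsq f x := by
  have hfc : Continuous f := hf.continuous
  have hEint : Integrable (fun x : R2 => Real.exp (-(γ₀ * ‖x‖^2)) * ‖f x‖^2) volume := by
    apply hφint.mono'
    · exact (((Real.continuous_exp.comp (by fun_prop)).mul (by fun_prop)) :
        Continuous fun x : R2 => Real.exp (-(γ₀ * ‖x‖^2)) * ‖f x‖^2).aestronglyMeasurable
    · filter_upwards with x
      have h1 : Real.exp (-(γ₀ * ‖x‖^2)) ≤ 1 := Real.exp_le_one_iff.2 (neg_nonpos.2 (by positivity))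
      have h2 : 0 < Real.exp (-(γ₀ * ‖x‖^2)) := Real.exp_pos _
      have h3 : (0:ℝ) ≤ ‖f x‖^2 := by positivity
      rw [Real.norm_eq_abs, abs_of_nonneg (by positivity)]
      nlinarith
  have hE2 := transferInt _ hEint
  have hT2 := transferInt _ hxf
  have hG2 := transferInt _ hgrad
  rw [Measure.volume_eq_prod] at hE2 hT2 hG2
  rw [transfer, transfer, transfer, Measure.volume_eq_prod,
    integral_prod _ hE2, integral_prod _ hT2, integral_prod _ hG2]
  have hslT := hT2.prod_right_ae
  have hslG := hG2.prod_right_ae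
  have key : ∀ᵐ a : ℝ, (∫ b, Real.exp (-(γ₀ * ‖mk2 a b‖^2)) * ‖f (mk2 a b)‖^2)
      ≤ 6 * (∫ b, ‖mk2 a b‖^2 * ‖f (mk2 a b)‖^2) + 16 * ∫ b, gradsq f (mk2 a b) := by
    filter_upwards [hslT, hslG] with a hT' hG'
    set g : ℝ → ℂ := fun b => f (mk2 a b) with hg
    have hgd : Differentiable ℝ g := fun b => (slice_hasDerivAt f hf a b).differentiableAt
    have hderiv : ∀ b, deriv g b = pd f 1 (mk2 a b) :=
      fun b => (slice_hasDerivAt f hf a b).deriv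
    have hT1d : Integrable (fun b => b^2 * ‖g b‖^2) volume := by
      apply hT'.mono'
      · exact (by have := mk2_cont a; fun_prop : Continuous fun b : ℝ => b^2 * ‖g b‖^2).aestronglyMeasurable
      · filter_upwards with b
        rw [Real.norm_eq_abs, abs_of_nonneg (by positivity), mk2_norm]
        have : (0:ℝ) ≤ ‖g b‖^2 := by positivity
        nlinarith [sq_nonneg a]
    have hG1d : Integrable (fun b => ‖deriv g b‖^2) volume := by
      apply hG'.mono'
      · apply Measurable.aestronglyMeasurable
        simp only [hderiv]
        exact ((pd_meas f 1).comp (mk2_cont a).measurable).norm.pow_const 2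
      · filter_upwards with b
        rw [hderiv b, Real.norm_eq_abs, abs_of_nonneg (by positivity)]
        have : (0:ℝ) ≤ ‖pd f 0 (mk2 a b)‖^2 := by positivity
        simp only [gradsq]
        linarith
    have h1d := onedim (fun b => Real.exp (-(γ₀ * ‖mk2 a b‖^2)))
      (fun b => (Real.exp_pos _).le)
      (fun b => Real.exp_le_one_iff.2 (neg_nonpos.2 (by positivity)))
      g hgd hT1d hG1d
    have h2 : (∫ b, b^2 * ‖g b‖^2) ≤ ∫ b, ‖mk2 a b‖^2 * ‖f (mk2 a b)‖^2 := by
      apply integral_mono hT1d hT'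
      intro b
      show b^2 * ‖g b‖^2 ≤ ‖mk2 a b‖^2 * ‖f (mk2 a b)‖^2
      rw [mk2_norm]
      have : (0:ℝ) ≤ ‖g b‖^2 := by positivity
      nlinarith [sq_nonneg a]
    have h3 : (∫ b, ‖deriv g b‖^2) ≤ ∫ b, gradsq f (mk2 a b) := by
      apply integral_mono hG1d hG'
      intro b
      show ‖deriv g b‖^2 ≤ gradsq f (mk2 a b)
      rw [hderiv b]
      have : (0:ℝ) ≤ ‖pd f 0 (mk2 a b)‖^2 := by positivity
      simp only [gradsq]
      linarith
    calc (∫ b, Real.exp (-(γ₀ * ‖mk2 a b‖^2)) * ‖f (mk2 a b)‖^2)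
        ≤ 6 * (∫ b, b^2 * ‖g b‖^2) + 16 * ∫ b, ‖deriv g b‖^2 := h1d
      _ ≤ 6 * (∫ b, ‖mk2 a b‖^2 * ‖f (mk2 a b)‖^2) + 16 * ∫ b, gradsq f (mk2 a b) := by
          linarith
  have hEi := hE2.integral_prod_left
  have hTi := hT2.integral_prod_left
  have hGi := hG2.integral_prod_left
  simp only at hEi hTi hGi
  have hmono := integral_mono_ae hEi ((hTi.const_mul 6).add (hGi.const_mul 16)) key
  simp only [Pi.add_apply] at hmono
  rw [integral_add (hTi.const_mul 6) (hGi.const_mul 16), integral_const_mul,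
    integral_const_mul] at hmono
  simpa using hmono


lemma norm_sq_R2 (x : R2) : ‖x‖^2 = (x 0)^2 + (x 1)^2 := by
  rw [EuclideanSpace.norm_eq, Real.sq_sqrt (by positivity), Fin.sum_univ_two]
  simp [sq_abs]

lemma angptwise (f : R2 → ℂ) (x : R2) (ε : ℝ) (hε : 0 < ε) :
    ‖(starRingEnd ℂ) (f x) * (Complex.I * ((x 1 : ℂ) * pd f 0 x - (x 0 : ℂ) * pd f 1 x))‖
      ≤ ε/2 * gradsq f x + 1/(2*ε) * (‖x‖^2 * ‖f x‖^2) := by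
  have hn := norm_sq_R2 x
  have h1 : ‖(starRingEnd ℂ) (f x) *
      (Complex.I * ((x 1 : ℂ) * pd f 0 x - (x 0 : ℂ) * pd f 1 x))‖
      = ‖f x‖ * ‖(x 1 : ℂ) * pd f 0 x - (x 0 : ℂ) * pd f 1 x‖ := by
    rw [norm_mul, norm_mul, RCLike.norm_conj, Complex.norm_I, one_mul]
  have h2 : ‖(x 1 : ℂ) * pd f 0 x - (x 0 : ℂ) * pd f 1 x‖
      ≤ |x 1| * ‖pd f 0 x‖ + |x 0| * ‖pd f 1 x‖ := by
    refine (norm_sub_le _ _).trans ?_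
    rw [norm_mul, norm_mul, Complex.norm_real, Complex.norm_real,
      Real.norm_eq_abs, Real.norm_eq_abs]
  have hkey : 2*ε*‖(starRingEnd ℂ) (f x) *
      (Complex.I * ((x 1 : ℂ) * pd f 0 x - (x 0 : ℂ) * pd f 1 x))‖
      ≤ ε^2 * gradsq f x + ‖x‖^2 * ‖f x‖^2 := by
    rw [h1]
    have hc : (0:ℝ) ≤ ‖f x‖ := norm_nonneg _
    have hu : (0:ℝ) ≤ ‖pd f 0 x‖ := norm_nonneg _
    have hv : (0:ℝ) ≤ ‖pd f 1 x‖ := norm_nonneg _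
    have ha : (0:ℝ) ≤ |x 1| := abs_nonneg _
    have hb : (0:ℝ) ≤ |x 0| := abs_nonneg _
    have hgs : gradsq f x = ‖pd f 0 x‖^2 + ‖pd f 1 x‖^2 := rfl
    rw [hgs, hn]
    have hsq0 : (x 0)^2 = |x 0|^2 := (sq_abs _).symm
    have hsq1 : (x 1)^2 = |x 1|^2 := (sq_abs _).symm
    rw [hsq0, hsq1]
    nlinarith [sq_nonneg (ε * ‖pd f 0 x‖ - |x 1| * ‖f x‖), sq_nonneg (ε * ‖pd f 1 x‖ - |x 0| * ‖f x‖),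
      mul_le_mul_of_nonneg_left h2 (mul_nonneg (by linarith : (0:ℝ) ≤ 2*ε) hc), hε]
  have h2e : (0:ℝ) < 2*ε := by linarith
  rw [show ε/2 * gradsq f x + 1/(2*ε) * (‖x‖^2 * ‖f x‖^2)
      = (ε^2 * gradsq f x + ‖x‖^2 * ‖f x‖^2)/(2*ε) by field_simp]
  rw [le_div_iff₀ h2e]
  linarith

lemma angMom_re_bound (f : R2 → ℂ) (hf : Differentiable ℝ f)
    (hgrad : Integrable (gradsq f) volume)
    (hxf : Integrable (fun x : R2 => ‖x‖^2 * ‖f x‖^2) volume)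
    (ε : ℝ) (hε : 0 < ε) :
    |(angMom f).re| ≤ ε/2 * (∫ x, gradsq f x) + 1/(2*ε) * ∫ x : R2, ‖x‖^2 * ‖f x‖^2 := by
  have h1 : |(angMom f).re| ≤ ‖angMom f‖ := Complex.abs_re_le_norm _
  have h2 : ‖angMom f‖ ≤ ∫ x : R2, ‖(starRingEnd ℂ) (f x) *
      (Complex.I * ((x 1 : ℂ) * pd f 0 x - (x 0 : ℂ) * pd f 1 x))‖ :=
    norm_integral_le_integral_norm _
  have h3 : (∫ x : R2, ‖(starRingEnd ℂ) (f x) *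
      (Complex.I * ((x 1 : ℂ) * pd f 0 x - (x 0 : ℂ) * pd f 1 x))‖)
      ≤ ∫ x : R2, (ε/2 * gradsq f x + 1/(2*ε) * (‖x‖^2 * ‖f x‖^2)) := by
    apply integral_mono_of_nonneg
    · exact Filter.Eventually.of_forall (fun x => norm_nonneg _)
    · exact (hgrad.const_mul _).add (hxf.const_mul _)
    · exact Filter.Eventually.of_forall (fun x => angptwise f x ε hε)
  rw [integral_add (hgrad.const_mul _) (hxf.const_mul _), integral_const_mul,
    integral_const_mul] at h3
  linarith




/-- For `0 < Ω < γ`, `B(f) ≍ ‖∇f‖² + ‖xf‖²` on `Σ`, with explicit lower constant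
`C₂ = min((γ²−Ω²)/(γ²+Ω²), (γ²−Ω²)/2)`. -/
theorem stmt2 (γ γ₀ V₀ Ω : ℝ) (hγ : 0 < γ) (hγ₀ : 0 < γ₀) (hV₀ : 0 ≤ V₀)
    (hΩ₁ : 0 < Ω) (hΩ₂ : Ω < γ) :
    ∃ C₁ : ℝ, 0 < C₁ ∧
      ∀ f : R2 → ℂ, Differentiable ℝ f → MemLp f 2 volume →
        Integrable (gradsq f) volume →
        Integrable (fun x : R2 => ‖x‖ ^ 2 * ‖f x‖ ^ 2) volume →
        min ((γ ^ 2 - Ω ^ 2) / (γ ^ 2 + Ω ^ 2)) ((γ ^ 2 - Ω ^ 2) / 2) *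
            ((∫ x : R2, gradsq f x) + ∫ x : R2, ‖x‖ ^ 2 * ‖f x‖ ^ 2)
          ≤ Bform γ γ₀ V₀ Ω f ∧
        Bform γ γ₀ V₀ Ω f ≤
          C₁ * ((∫ x : R2, gradsq f x) + ∫ x : R2, ‖x‖ ^ 2 * ‖f x‖ ^ 2) := by
  refine ⟨1 + γ^2 + Ω + 32*V₀, by positivity, ?_⟩
  intro f hf hf2 hgrad hxf
  set G := ∫ x : R2, gradsq f x with hGdef
  set T := ∫ x : R2, ‖x‖^2 * ‖f x‖^2 with hTdef
  have hG0 : 0 ≤ G := integral_nonneg (fun x => by unfold gradsq; positivity)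
  have hT0 : 0 ≤ T := integral_nonneg (fun x => by positivity)
  have hφint : Integrable (fun x : R2 => ‖f x‖^2) volume := hf2.norm.integrable_sq
  have hEint : Integrable (fun x : R2 => Real.exp (-(γ₀ * ‖x‖^2)) * ‖f x‖^2) volume := by
    apply hφint.mono'
    · exact (((Real.continuous_exp.comp (by fun_prop)).mul (by have := hf.continuous; fun_prop)) :
        Continuous fun x : R2 => Real.exp (-(γ₀ * ‖x‖^2)) * ‖f x‖^2).aestronglyMeasurable
    · filter_upwards with x
      have h1 : Real.exp (-(γ₀ * ‖x‖^2)) ≤ 1 :=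
        Real.exp_le_one_iff.2 (neg_nonpos.2 (by positivity))
      have h2 : 0 < Real.exp (-(γ₀ * ‖x‖^2)) := Real.exp_pos _
      have h3 : (0:ℝ) ≤ ‖f x‖^2 := by positivity
      rw [Real.norm_eq_abs, abs_of_nonneg (by positivity)]
      nlinarith
  set E := ∫ x : R2, Real.exp (-(γ₀ * ‖x‖^2)) * ‖f x‖^2 with hEdef
  have hE0 : 0 ≤ E := integral_nonneg (fun x => by positivity)
  have hEb : E ≤ 6*T + 16*G := twodim γ₀ hγ₀ f hf hφint hgrad hxf
  have hBeq : Bform γ γ₀ V₀ Ω f = G + (γ^2 * T + 2*V₀*E) - 2*Ω*(angMom f).re := by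
    unfold Bform
    have hfun : (fun x : R2 => Vpot γ γ₀ V₀ x * ‖f x‖^2)
        = fun x : R2 => γ^2/2 * (‖x‖^2 * ‖f x‖^2)
            + V₀ * (Real.exp (-(γ₀ * ‖x‖^2)) * ‖f x‖^2) := by
      funext x; unfold Vpot; ring
    rw [hfun, integral_add (hxf.const_mul _) (hEint.const_mul _), integral_const_mul,
      integral_const_mul, ← hTdef, ← hEdef, ← hGdef]
    ring
  have hγΩ : (0:ℝ) < γ^2 + Ω^2 := by positivity
  constructor
  · -- lower bound
    set ε₀ := 2*Ω/(γ^2+Ω^2) with hε₀def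
    have hε₀ : 0 < ε₀ := by positivity
    have hA := angMom_re_bound f hf hgrad hxf ε₀ hε₀
    rw [← hGdef, ← hTdef] at hA
    have h2Ω : 2*Ω*(angMom f).re ≤ Ω*ε₀*G + Ω/ε₀*T := by
      have h1 := (abs_le.1 hA).2
      have hdiv : 2*Ω*(ε₀/2*G + 1/(2*ε₀)*T) = Ω*ε₀*G + Ω/ε₀*T := by
        field_simp
      linarith [mul_le_mul_of_nonneg_left h1 (by linarith : (0:ℝ) ≤ 2*Ω), hdiv]
    have hkey1 : 1 - Ω*ε₀ = (γ^2-Ω^2)/(γ^2+Ω^2) := by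
      rw [hε₀def]; field_simp; ring
    have hkey2 : γ^2 - Ω/ε₀ = (γ^2-Ω^2)/2 := by
      rw [hε₀def]
      rw [div_div_eq_mul_div]
      field_simp [hΩ₁.ne']
      ring
    have hm1 : min ((γ^2-Ω^2)/(γ^2+Ω^2)) ((γ^2-Ω^2)/2) ≤ (γ^2-Ω^2)/(γ^2+Ω^2) :=
      min_le_left _ _
    have hm2 : min ((γ^2-Ω^2)/(γ^2+Ω^2)) ((γ^2-Ω^2)/2) ≤ (γ^2-Ω^2)/2 := min_le_right _ _
    have e1 : min ((γ^2-Ω^2)/(γ^2+Ω^2)) ((γ^2-Ω^2)/2) * G ≤ (1 - Ω*ε₀) * G := by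
      rw [hkey1]; exact mul_le_mul_of_nonneg_right hm1 hG0
    have e2 : min ((γ^2-Ω^2)/(γ^2+Ω^2)) ((γ^2-Ω^2)/2) * T ≤ (γ^2 - Ω/ε₀) * T := by
      rw [hkey2]; exact mul_le_mul_of_nonneg_right hm2 hT0
    nlinarith [mul_nonneg hV₀ hE0, e1, e2, h2Ω, hBeq]
  · -- upper bound
    have hA := angMom_re_bound f hf hgrad hxf 1 one_pos
    rw [← hGdef, ← hTdef] at hA
    have h1 : -(angMom f).re ≤ 1/2*G + 1/(2*1)*T := by
      have := (abs_le.1 hA).1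
      linarith
    have h2 : -(2*Ω*(angMom f).re) ≤ Ω*G + Ω*T := by
      nlinarith [mul_le_mul_of_nonneg_left h1 (by linarith : (0:ℝ) ≤ 2*Ω)]
    have hEmul : 2*V₀*E ≤ 12*(V₀*T) + 32*(V₀*G) := by
      nlinarith [mul_le_mul_of_nonneg_left hEb (by linarith : (0:ℝ) ≤ 2*V₀)]
    have hrhs : (1+γ^2+Ω+32*V₀)*(G+T)
        = G + T + γ^2*G + γ^2*T + Ω*G + Ω*T + 32*(V₀*G) + 32*(V₀*T) := by ring
    linarith [hBeq, h2, hEmul, hrhs, hT0, mul_nonneg (sq_nonneg γ) hG0,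
      mul_nonneg hV₀ hT0]
end
end

section
/- There exists a constant C > 0 such that for all complex numbers u, v, | |u|⁴ ln(|u|²/√e) − |v|⁴ ln(|v|²/√e) | ≤ C |u − v| ( |u|² + |u|⁴ + |v|² + |v|⁴ ). -/
noncomputable def f5 (r : ℝ) : ℝ := r ^ 4 * (2 * Real.log r - 1/2)

lemma f5_deriv {r : ℝ} (hr : 0 < r) :
    HasDerivAt f5 (8 * r ^ 3 * Real.log r) r := by
  have h := (hasDerivAt_pow 4 r).mul
    (((Real.hasDerivAt_log hr.ne').const_mul 2).sub_const (1/2 : ℝ))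
  refine h.congr_deriv ?_
  field_simp
  ring

lemma deriv_bound {r : ℝ} (hr : 0 < r) :
    |8 * r ^ 3 * Real.log r| ≤ 8 * (r ^ 2 + r ^ 4) := by
  rcases le_or_gt r 1 with h1 | h1
  · have hlt : |Real.log r * r| < 1 := Real.abs_log_mul_self_lt r hr h1
    have : |8 * r ^ 3 * Real.log r| = 8 * r ^ 2 * |Real.log r * r| := by
      rw [abs_mul, abs_mul]
      rw [abs_of_nonneg (by norm_num : (0:ℝ) ≤ 8), abs_of_nonneg (pow_nonneg hr.le 3),
        abs_mul, abs_of_nonneg hr.le]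
      ring
    rw [this]
    nlinarith [sq_nonneg r, pow_nonneg hr.le 4, abs_nonneg (Real.log r * r)]
  · have hlog0 : 0 ≤ Real.log r := Real.log_nonneg h1.le
    have hlog : Real.log r ≤ r := (Real.log_le_sub_one_of_pos hr).trans (by linarith)
    rw [abs_of_nonneg (by positivity)]
    nlinarith [pow_nonneg hr.le 3, sq_nonneg r]

lemma f5_zero_bound {a : ℝ} (ha : 0 ≤ a) : |f5 a| ≤ 8 * a * (a ^ 2 + a ^ 4) := by
  rcases eq_or_lt_of_le ha with rfl | ha
  · simp [f5]
  rcases le_or_gt a 1 with h1 | h1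
  · have hlt : |Real.log a * a| < 1 := Real.abs_log_mul_self_lt a ha h1
    have key : |f5 a| ≤ 2 * a ^ 3 * |Real.log a * a| + a ^ 4 / 2 := by
      unfold f5
      calc |a ^ 4 * (2 * Real.log a - 1/2)|
          ≤ |a ^ 4 * (2 * Real.log a)| + |a ^ 4 * (1/2 : ℝ)| := by
            rw [mul_sub]; exact abs_sub _ _
        _ = 2 * a ^ 3 * |Real.log a * a| + a ^ 4 / 2 := by
            rw [abs_mul, abs_mul, abs_mul, abs_mul,
              abs_of_nonneg (pow_nonneg ha.le 4), abs_of_nonneg ha.le]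
            rw [abs_of_nonneg (by norm_num : (0:ℝ) ≤ 2),
              abs_of_nonneg (by norm_num : (0:ℝ) ≤ (1/2:ℝ))]
            ring
    nlinarith [pow_nonneg ha.le 3, pow_nonneg ha.le 4, pow_nonneg ha.le 5,
      abs_nonneg (Real.log a * a), sq_nonneg (a - 1), pow_nonneg ha.le 2]
  · have hlog0 : 0 ≤ Real.log a := Real.log_nonneg h1.le
    have hlog : Real.log a ≤ a := (Real.log_le_sub_one_of_pos ha).trans (by linarith)
    have h4 : |f5 a| ≤ a ^ 4 * (2 * a) := by
      unfold f5
      rw [abs_mul, abs_of_nonneg (pow_nonneg ha.le 4)]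
      have : |2 * Real.log a - 1/2| ≤ 2 * a := by
        rw [abs_le]; constructor <;> nlinarith
      exact mul_le_mul_of_nonneg_left this (pow_nonneg ha.le 4)
    nlinarith [pow_nonneg ha.le 3, pow_nonneg ha.le 5]

lemma f5_lip {a b : ℝ} (hb : 0 ≤ b) (hba : b ≤ a) :
    |f5 a - f5 b| ≤ 8 * |a - b| * (a ^ 2 + a ^ 4 + b ^ 2 + b ^ 4) := by
  have ha : 0 ≤ a := hb.trans hba
  rcases eq_or_lt_of_le hb with rfl | hb
  · have h0 : f5 0 = 0 := by simp [f5]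
    rw [h0, sub_zero, sub_zero, abs_of_nonneg ha]
    have := f5_zero_bound ha
    nlinarith [pow_nonneg ha 2, pow_nonneg ha 4]
  · have hconv : Convex ℝ (Set.Icc b a) := convex_Icc b a
    have hC : ∀ x ∈ Set.Icc b a, ‖(8 * x ^ 3 * Real.log x : ℝ)‖ ≤ 8 * (a ^ 2 + a ^ 4) := by
      intro x hx
      have hx0 : 0 < x := hb.trans_le hx.1
      have := deriv_bound hx0
      have hmono : x ^ 2 + x ^ 4 ≤ a ^ 2 + a ^ 4 := by
        have h2 := pow_le_pow_left₀ hx0.le hx.2 2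
        have h4 := pow_le_pow_left₀ hx0.le hx.2 4
        linarith
      calc ‖(8 * x ^ 3 * Real.log x : ℝ)‖ ≤ 8 * (x ^ 2 + x ^ 4) := this
        _ ≤ 8 * (a ^ 2 + a ^ 4) := by linarith
    have hderiv : ∀ x ∈ Set.Icc b a,
        HasDerivWithinAt f5 (8 * x ^ 3 * Real.log x) (Set.Icc b a) x := fun x hx =>
      (f5_deriv (hb.trans_le hx.1)).hasDerivWithinAt
    have := hconv.norm_image_sub_le_of_norm_hasDerivWithin_le hderiv hC
      (Set.left_mem_Icc.2 hba) (Set.right_mem_Icc.2 hba)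
    calc |f5 a - f5 b| = ‖f5 a - f5 b‖ := rfl
      _ ≤ 8 * (a ^ 2 + a ^ 4) * ‖a - b‖ := this
      _ ≤ 8 * |a - b| * (a ^ 2 + a ^ 4 + b ^ 2 + b ^ 4) := by
          rw [Real.norm_eq_abs]
          nlinarith [abs_nonneg (a - b), pow_nonneg hb.le 2, pow_nonneg hb.le 4]

lemma f5_eq (a : ℝ) (ha : 0 ≤ a) :
    a ^ 4 * Real.log (a ^ 2 / Real.sqrt (Real.exp 1)) = f5 a := by
  rcases eq_or_lt_of_le ha with rfl | ha
  · simp [f5]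
  · unfold f5
    rw [Real.log_div (by positivity) (by positivity), Real.log_pow,
      Real.log_sqrt (Real.exp_pos 1).le, Real.log_exp]
    norm_num

/-- There is `C > 0` such that for all complex `u, v`,
`| |u|⁴ ln(|u|²/√e) − |v|⁴ ln(|v|²/√e) | ≤ C |u−v| (|u|² + |u|⁴ + |v|² + |v|⁴)`. -/
theorem stmt5 :
    ∃ C : ℝ, 0 < C ∧
      ∀ u v : ℂ,
        |‖u‖ ^ 4 * Real.log (‖u‖ ^ 2 / Real.sqrt (Real.exp 1))
            - ‖v‖ ^ 4 * Real.log (‖v‖ ^ 2 / Real.sqrt (Real.exp 1))| ≤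
          C * ‖u - v‖ *
            (‖u‖ ^ 2 + ‖u‖ ^ 4 +
              ‖v‖ ^ 2 + ‖v‖ ^ 4) := by
  refine ⟨8, by norm_num, fun u v => ?_⟩
  set a := ‖u‖ with h
  set b := ‖v‖ with h2
  have ha : 0 ≤ a := norm_nonneg u
  have hb : 0 ≤ b := norm_nonneg v
  rw [f5_eq a ha, f5_eq b hb]
  have habs : |a - b| ≤ ‖u - v‖ := abs_norm_sub_norm_le u v
  have key : |f5 a - f5 b| ≤ 8 * |a - b| * (a ^ 2 + a ^ 4 + b ^ 2 + b ^ 4) := by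
    rcases le_total b a with hba | hab
    · exact f5_lip hb hba
    · have := f5_lip ha hab
      rw [abs_sub_comm, abs_sub_comm a b]
      calc |f5 b - f5 a| ≤ 8 * |b - a| * (b ^ 2 + b ^ 4 + a ^ 2 + a ^ 4) := this
        _ = 8 * |b - a| * (a ^ 2 + a ^ 4 + b ^ 2 + b ^ 4) := by ring
  calc |f5 a - f5 b| ≤ 8 * |a - b| * (a ^ 2 + a ^ 4 + b ^ 2 + b ^ 4) := key
    _ ≤ 8 * ‖u - v‖ * (a ^ 2 + a ^ 4 + b ^ 2 + b ^ 4) := by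
        have : 0 ≤ a ^ 2 + a ^ 4 + b ^ 2 + b ^ 4 := by positivity
        nlinarith [abs_nonneg (a - b)]
end

section
/- Let 0 < γ < 1/(2 e^{3/2}) and A(x) = γ(−x₂, x₁). Then there exist λ, b > 0 such that f = λ e^{−b|x|²} satisfies ‖f‖²_{L²} ≤ π (hence ≤ ‖Q‖²_{L²}) and E⁰_γ(f) := (1/2)‖(∇ − iA)f‖²_{L²} + (1/2)∫_{ℝ²} |f|⁴ ln(|f|²/√e) dx < 0. -/
open MeasureTheory

noncomputable section

/-- `|(∇ − iA)f(x)|²` with magnetic potential `A(x) = γ(−x₂, x₁)`. -/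
noncomputable def magsq (γ : ℝ) (f : R2 → ℂ) (x : R2) : ℝ :=
  ‖pd f 0 x - Complex.I * ((-(γ * x 1) : ℝ) : ℂ) * f x‖ ^ 2 +
    ‖pd f 1 x - Complex.I * ((γ * x 0 : ℝ) : ℂ) * f x‖ ^ 2

/-- The Gaussian trial function `x ↦ λ e^{−b|x|²}` (complex-valued). -/
noncomputable def gaussF (lam b : ℝ) : R2 → ℂ :=
  fun x => ((lam * Real.exp (-(b * ‖x‖ ^ 2)) : ℝ) : ℂ)

/-! ### Auxiliary lemmas -/

lemma aux_hasF (lam b : ℝ) (x : R2) :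
    HasFDerivAt (fun x : R2 => lam * Real.exp (-(b * ‖x‖ ^ 2)))
      ((lam * Real.exp (-(b * ‖x‖ ^ 2)) * (-b)) • (2 • (innerSL ℝ x))) x := by
  have h0 : HasFDerivAt (fun x : R2 => ‖x‖ ^ 2) (2 • (innerSL ℝ x)) x := by
    simpa using (hasFDerivAt_id x).norm_sq
  have h2 := (Real.hasDerivAt_exp (-(b * ‖x‖ ^ 2))).comp_hasFDerivAt x ((h0.const_mul b).neg)
  refine (h2.const_mul lam).congr_fderiv ?_
  ext v; simp; ring

lemma aux_pd_gauss (lam b : ℝ) (j : Fin 2) (x : R2) :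
    pd (gaussF lam b) j x
      = ((-(2 * b) * x j * (lam * Real.exp (-(b * ‖x‖ ^ 2))) : ℝ) : ℂ) := by
  have hg : HasFDerivAt (gaussF lam b)
      (Complex.ofRealCLM.comp
        ((lam * Real.exp (-(b * ‖x‖ ^ 2)) * (-b)) • (2 • (innerSL ℝ x)))) x :=
    Complex.ofRealCLM.hasFDerivAt.comp x (aux_hasF lam b x)
  rw [pd, hg.fderiv]
  fin_cases j <;>
  · simp [real_inner_comm, EuclideanSpace.inner_single_left, EuclideanSpace.inner_single_right]
    ring

lemma aux_normsq_R2 (x : R2) : ‖x‖ ^ 2 = x 0 ^ 2 + x 1 ^ 2 := by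
  rw [EuclideanSpace.norm_eq, Real.sq_sqrt (by positivity)]
  simp [Fin.sum_univ_two, sq_abs]

lemma aux_normsq_helper (p q : ℝ) : ‖(p : ℂ) - Complex.I * (q : ℂ)‖ ^ 2 = p ^ 2 + q ^ 2 := by
  rw [Complex.sq_norm, Complex.normSq_apply]
  simp
  ring

lemma aux_magsq_gauss (γ lam b : ℝ) (x : R2) :
    magsq γ (gaussF lam b) x
      = (4 * b ^ 2 + γ ^ 2) * ‖x‖ ^ 2 * (lam * Real.exp (-(b * ‖x‖ ^ 2))) ^ 2 := by
  have e1 : pd (gaussF lam b) 0 x - Complex.I * ((-(γ * x 1) : ℝ) : ℂ) * gaussF lam b x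
      = ((-(2 * b) * x 0 * (lam * Real.exp (-(b * ‖x‖ ^ 2))) : ℝ) : ℂ)
        - Complex.I * ((-(γ * x 1) * (lam * Real.exp (-(b * ‖x‖ ^ 2))) : ℝ) : ℂ) := by
    rw [aux_pd_gauss]; unfold gaussF; push_cast; ring
  have e2 : pd (gaussF lam b) 1 x - Complex.I * ((γ * x 0 : ℝ) : ℂ) * gaussF lam b x
      = ((-(2 * b) * x 1 * (lam * Real.exp (-(b * ‖x‖ ^ 2))) : ℝ) : ℂ)
        - Complex.I * ((γ * x 0 * (lam * Real.exp (-(b * ‖x‖ ^ 2))) : ℝ) : ℂ) := by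
    rw [aux_pd_gauss]; unfold gaussF; push_cast; ring
  rw [magsq, e1, e2, aux_normsq_helper, aux_normsq_helper, aux_normsq_R2]
  ring

lemma aux_norm_gaussF {lam : ℝ} (hlam : 0 < lam) (b : ℝ) (x : R2) :
    ‖gaussF lam b x‖ = lam * Real.exp (-(b * ‖x‖ ^ 2)) := by
  rw [gaussF, Complex.norm_real]
  exact abs_of_pos (by positivity)

lemma aux_radial (g : ℝ → ℝ) :
    ∫ x : R2, g ‖x‖ = 2 * Real.pi * ∫ y in Set.Ioi (0:ℝ), y * g y := by
  have h := MeasureTheory.integral_fun_norm_addHaar (volume : Measure R2) g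
  rw [h]
  have hd : Module.finrank ℝ R2 = 2 := finrank_euclideanSpace_fin
  rw [hd]
  have hb : (volume (Metric.ball (0:R2) 1)).toReal = Real.pi := by
    rw [EuclideanSpace.volume_ball]
    simp [Real.Gamma_two, Real.sq_sqrt Real.pi_nonneg, Real.Gamma_add_one,
      ENNReal.toReal_ofReal Real.pi_nonneg]
  rw [measureReal_def, hb]
  simp only [smul_eq_mul, nsmul_eq_mul, Nat.cast_ofNat]
  rw [← integral_const_mul]
  rw [show (2:ℝ) * Real.pi * ∫ y in Set.Ioi (0:ℝ), y * g y
      = 2 * ∫ y in Set.Ioi (0:ℝ), Real.pi * (y * g y) by rw [integral_const_mul]; ring]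
  norm_num

lemma aux_J1 {c : ℝ} (hc : 0 < c) :
    ∫ y in Set.Ioi (0:ℝ), y * Real.exp (-(c * y ^ 2)) = 1 / (2 * c) := by
  have h := integral_rpow_mul_exp_neg_mul_rpow (p := 2) (q := 1) (b := c)
    two_pos (by norm_num) hc
  rw [show ∫ y in Set.Ioi (0:ℝ), y * Real.exp (-(c * y ^ 2))
      = ∫ y in Set.Ioi (0:ℝ), y ^ (1:ℝ) * Real.exp (-c * y ^ (2:ℝ)) by
    refine setIntegral_congr_fun measurableSet_Ioi (fun y hy => ?_)
    rw [Real.rpow_one, Real.rpow_two]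
    ring_nf, h]
  norm_num
  exact Real.rpow_neg_one c

lemma aux_J3 {c : ℝ} (hc : 0 < c) :
    ∫ y in Set.Ioi (0:ℝ), y ^ 3 * Real.exp (-(c * y ^ 2)) = 1 / (2 * c ^ 2) := by
  have h := integral_rpow_mul_exp_neg_mul_rpow (p := 2) (q := 3) (b := c)
    two_pos (by norm_num) hc
  rw [show ∫ y in Set.Ioi (0:ℝ), y ^ 3 * Real.exp (-(c * y ^ 2))
      = ∫ y in Set.Ioi (0:ℝ), y ^ (3:ℝ) * Real.exp (-c * y ^ (2:ℝ)) by
    refine setIntegral_congr_fun measurableSet_Ioi (fun y hy => ?_)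
    rw [show ((3:ℝ)) = ((3:ℕ):ℝ) by norm_num, Real.rpow_natCast, Real.rpow_two]
    ring_nf, h]
  norm_num

lemma aux_int1 {c : ℝ} (hc : 0 < c) :
    IntegrableOn (fun y : ℝ => y * Real.exp (-(c * y ^ 2))) (Set.Ioi 0) := by
  have h := integrableOn_rpow_mul_exp_neg_mul_sq hc (s := 1) (by norm_num)
  refine h.congr_fun (fun y hy => ?_) measurableSet_Ioi
  dsimp only; rw [Real.rpow_one]; ring_nf

lemma aux_int3 {c : ℝ} (hc : 0 < c) :
    IntegrableOn (fun y : ℝ => y ^ 3 * Real.exp (-(c * y ^ 2))) (Set.Ioi 0) := by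
  have h := integrableOn_rpow_mul_exp_neg_mul_sq hc (s := 3) (by norm_num)
  refine h.congr_fun (fun y hy => ?_) measurableSet_Ioi
  dsimp only; rw [show ((3:ℝ)) = ((3:ℕ):ℝ) by norm_num, Real.rpow_natCast]; ring_nf

/-- mass integral -/
lemma aux_mass {lam b : ℝ} (hlam : 0 < lam) (hb : 0 < b) :
    (∫ x : R2, ‖gaussF lam b x‖ ^ 2) = Real.pi * lam ^ 2 / (2 * b) := by
  have h1 : (∫ x : R2, ‖gaussF lam b x‖ ^ 2)
      = ∫ x : R2, (fun y : ℝ => lam ^ 2 * Real.exp (-(2 * b * y ^ 2))) ‖x‖ := by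
    congr 1; funext x
    rw [aux_norm_gaussF hlam, mul_pow, pow_two (Real.exp _), ← Real.exp_add]
    ring_nf
  rw [h1, aux_radial (fun y : ℝ => lam ^ 2 * Real.exp (-(2 * b * y ^ 2)))]
  have h2 : (∫ y in Set.Ioi (0:ℝ), y * (lam ^ 2 * Real.exp (-(2 * b * y ^ 2))))
      = lam ^ 2 * ∫ y in Set.Ioi (0:ℝ), y * Real.exp (-(2 * b * y ^ 2)) := by
    rw [← integral_const_mul]
    congr 1; funext y; ring
  rw [h2, aux_J1 (by positivity)]
  field_simp

/-- kinetic (magnetic) integral -/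
lemma aux_kin {γ lam b : ℝ} (hlam : 0 < lam) (hb : 0 < b) :
    (∫ x : R2, magsq γ (gaussF lam b) x)
      = Real.pi * (4 * b ^ 2 + γ ^ 2) * lam ^ 2 / (4 * b ^ 2) := by
  have h1 : (∫ x : R2, magsq γ (gaussF lam b) x)
      = ∫ x : R2, (fun y : ℝ =>
          (4 * b ^ 2 + γ ^ 2) * lam ^ 2 * (y ^ 2 * Real.exp (-(2 * b * y ^ 2)))) ‖x‖ := by
    congr 1; funext x
    rw [aux_magsq_gauss, mul_pow, pow_two (Real.exp _), ← Real.exp_add]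
    ring_nf
  rw [h1, aux_radial (fun y : ℝ =>
    (4 * b ^ 2 + γ ^ 2) * lam ^ 2 * (y ^ 2 * Real.exp (-(2 * b * y ^ 2))))]
  have h2 : (∫ y in Set.Ioi (0:ℝ),
        y * ((4 * b ^ 2 + γ ^ 2) * lam ^ 2 * (y ^ 2 * Real.exp (-(2 * b * y ^ 2)))))
      = (4 * b ^ 2 + γ ^ 2) * lam ^ 2
          * ∫ y in Set.Ioi (0:ℝ), y ^ 3 * Real.exp (-(2 * b * y ^ 2)) := by
    rw [← integral_const_mul]
    congr 1; funext y; ring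
  rw [h2, aux_J3 (by positivity)]
  field_simp
  ring

/-- nonlinear integral -/
lemma aux_nl {lam b : ℝ} (hlam : 0 < lam) (hb : 0 < b) :
    (∫ x : R2, ‖gaussF lam b x‖ ^ 4 *
        Real.log (‖gaussF lam b x‖ ^ 2 / Real.sqrt (Real.exp 1)))
      = Real.pi * lam ^ 4 * (2 * Real.log lam - 1) / (4 * b) := by
  have h1 : (∫ x : R2, ‖gaussF lam b x‖ ^ 4 *
        Real.log (‖gaussF lam b x‖ ^ 2 / Real.sqrt (Real.exp 1)))
      = ∫ x : R2, (fun y : ℝ => lam ^ 4 * Real.exp (-(4 * b * y ^ 2)) *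
          (2 * Real.log lam - 2 * b * y ^ 2 - 1/2)) ‖x‖ := by
    congr 1; funext x
    rw [aux_norm_gaussF hlam]
    have hle : (0:ℝ) < lam * Real.exp (-(b * ‖x‖ ^ 2)) := by positivity
    rw [Real.log_div (by positivity) (by positivity), Real.log_pow,
      Real.log_mul (ne_of_gt hlam) (Real.exp_ne_zero _), Real.log_exp,
      Real.log_sqrt (Real.exp_pos 1).le, Real.log_exp]
    have hexp : (lam * Real.exp (-(b * ‖x‖ ^ 2))) ^ 4
        = lam ^ 4 * Real.exp (-(4 * b * ‖x‖ ^ 2)) := by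
      rw [mul_pow, ← Real.exp_nat_mul]
      congr 2
      push_cast
      ring
    rw [hexp]
    push_cast
    ring
  rw [h1, aux_radial (fun y : ℝ => lam ^ 4 * Real.exp (-(4 * b * y ^ 2)) *
    (2 * Real.log lam - 2 * b * y ^ 2 - 1/2))]
  have h2 : (∫ y in Set.Ioi (0:ℝ), y * (lam ^ 4 * Real.exp (-(4 * b * y ^ 2)) *
        (2 * Real.log lam - 2 * b * y ^ 2 - 1/2)))
      = (lam ^ 4 * (2 * Real.log lam - 1/2)) *
          (∫ y in Set.Ioi (0:ℝ), y * Real.exp (-(4 * b * y ^ 2)))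
        + (-(2 * b * lam ^ 4)) *
          (∫ y in Set.Ioi (0:ℝ), y ^ 3 * Real.exp (-(4 * b * y ^ 2))) := by
    rw [← integral_const_mul, ← integral_const_mul,
      ← integral_add (((aux_int1 (by positivity : (0:ℝ) < 4 * b)).const_mul _))
        (((aux_int3 (by positivity : (0:ℝ) < 4 * b)).const_mul _))]
    refine setIntegral_congr_fun measurableSet_Ioi (fun y hy => ?_)
    ring
  rw [h2, aux_J1 (by positivity), aux_J3 (by positivity)]
  field_simp
  ring

/-- For `0 < γ < 1/(2e^{3/2})` there are `λ, b > 0` such that `f = λe^{−b|x|²}`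
has `‖f‖₂² ≤ π` (hence `≤ ‖Q‖₂²`) and negative magnetic energy `E⁰_γ(f) < 0`. -/
theorem stmt12 (γ : ℝ) (hγ₁ : 0 < γ) (hγ₂ : γ < 1 / (2 * Real.exp (3 / 2))) :
    ∃ lam b : ℝ, 0 < lam ∧ 0 < b ∧
      (∫ x : R2, ‖gaussF lam b x‖ ^ 2) ≤ Real.pi ∧
      (1 / 2) * (∫ x : R2, magsq γ (gaussF lam b) x) +
        (1 / 2) * (∫ x : R2, ‖gaussF lam b x‖ ^ 4 *
          Real.log (‖gaussF lam b x‖ ^ 2 / Real.sqrt (Real.exp 1))) < 0 := by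
  refine ⟨Real.sqrt (2 * γ), γ, Real.sqrt_pos.mpr (by linarith), hγ₁, ?_, ?_⟩
  · rw [aux_mass (Real.sqrt_pos.mpr (by linarith)) hγ₁,
      Real.sq_sqrt (by linarith : (0:ℝ) ≤ 2 * γ)]
    rw [show Real.pi * (2 * γ) / (2 * γ) = Real.pi by field_simp]
  · have hlam : 0 < Real.sqrt (2 * γ) := Real.sqrt_pos.mpr (by linarith)
    have hsq : Real.sqrt (2 * γ) ^ 2 = 2 * γ := Real.sq_sqrt (by linarith)
    have h4 : Real.sqrt (2 * γ) ^ 4 = (2 * γ) ^ 2 := by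
      rw [show (4:ℕ) = 2 * 2 from rfl, pow_mul, hsq]
    have hlog : Real.log (Real.sqrt (2 * γ)) = Real.log (2 * γ) / 2 :=
      Real.log_sqrt (by linarith)
    rw [aux_kin hlam hγ₁, aux_nl hlam hγ₁, hsq, h4, hlog]
    have hL : Real.log (2 * γ) < -(3/2) := by
      have he := Real.exp_pos (3/2 : ℝ)
      have h2γ : 2 * γ < (Real.exp (3/2))⁻¹ := by
        rw [inv_eq_one_div, lt_div_iff₀ he]
        rw [lt_div_iff₀ (by positivity)] at hγ₂
        nlinarith [hγ₂]
      calc Real.log (2 * γ) < Real.log (Real.exp (3/2))⁻¹ :=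
            Real.log_lt_log (by linarith) h2γ
        _ = -(3/2) := by rw [Real.log_inv, Real.log_exp]
    have hπγ : 0 < Real.pi * γ := mul_pos Real.pi_pos hγ₁
    have key : Real.pi * γ * (Real.log (2 * γ) + 3/2) < 0 :=
      mul_neg_of_pos_of_neg hπγ (by linarith)
    have hγne : γ ≠ 0 := ne_of_gt hγ₁
    have heq : (1/2) * (Real.pi * (4 * γ ^ 2 + γ ^ 2) * (2 * γ) / (4 * γ ^ 2)) +
        (1/2) * (Real.pi * (2 * γ) ^ 2 * (2 * (Real.log (2 * γ) / 2) - 1) / (4 * γ)) =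
        Real.pi * γ * (Real.log (2 * γ) + 3 / 2) / 2 := by
      field_simp
      ring
    rw [heq]
    exact div_neg_of_neg_of_pos key two_pos
end
end
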